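/- arXiv:1605.00328 — 2 statements merged into one kernel-verified Lean document; each statement's English description precedes it below -/
import Mathlib

section
/- For any permutation r of Fin n, the sum over i of (r(i) - i)^2 (as integers) is at most n(n^2-1)/3, with the maximum achieved by the reversing permutation r(i) = n-1-i. -/
open Finset

lemma sum_range_cast_two (n : ℕ) : 2 * ∑ i ∈ range n, (i : ℤ) = n * (n - 1) := by
  induction n with
  | zero => simp
  | succ m ih => rw [Finset.sum_range_succ]; push_cast; nlinarith [ih]

lemma sum_range_sq_six (n : ℕ) : 6 * ∑ i ∈ range n, (i : ℤ)^2 = n * (n - 1) * (2 * n - 1) := by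
  induction n with
  | zero => simp
  | succ m ih => rw [Finset.sum_range_succ]; push_cast; nlinarith [ih]

lemma rev_cast (n : ℕ) (i : Fin n) : ((Fin.revPerm i : Fin n) : ℤ) = (n : ℤ) - 1 - (i : ℤ) := by
  have hi : (i : ℕ) < n := i.isLt
  simp only [Fin.revPerm_apply, Fin.val_rev]
  omega

lemma rev_sum (n : ℕ) :
    ∑ i : Fin n, ((Fin.revPerm i : ℤ) - (i : ℤ))^2 = (n * (n^2 - 1)) / 3 := by
  have h1 := sum_range_cast_two n
  have h2 := sum_range_sq_six n
  have key : 3 * ∑ i : Fin n, ((Fin.revPerm i : ℤ) - (i : ℤ))^2 = n * (n^2 - 1) := by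
    have step1 : ∑ i : Fin n, ((Fin.revPerm i : ℤ) - (i : ℤ))^2
        = ∑ i : Fin n, (((n:ℤ) - 1 - (i:ℤ)) - (i:ℤ))^2 :=
      Finset.sum_congr rfl fun i _ => by rw [rev_cast]
    rw [step1, Fin.sum_univ_eq_sum_range (fun i => (((n:ℤ) - 1 - (i:ℤ)) - (i:ℤ))^2)]
    have expand : ∀ i ∈ range n, (((n:ℤ) - 1 - i) - i)^2
        = ((n:ℤ)-1)^2 - (4*((n:ℤ)-1)) * i + 4 * i^2 := fun i _ => by ring
    rw [Finset.sum_congr rfl expand, Finset.sum_add_distrib, Finset.sum_sub_distrib,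
      Finset.sum_const, ← Finset.mul_sum, ← Finset.mul_sum]
    simp only [nsmul_eq_mul, card_range]
    nlinarith [h1, h2]
  omega

theorem spearman_displacement_bound (n : ℕ) :
    (∀ r : Equiv.Perm (Fin n),
      ∑ i : Fin n, ((r i : ℤ) - (i : ℤ))^2 ≤ (n * (n^2 - 1)) / 3) ∧
    ∑ i : Fin n, ((Fin.revPerm i : ℤ) - (i : ℤ))^2 = (n * (n^2 - 1)) / 3 := by
  refine ⟨fun r => ?_, rev_sum n⟩
  rw [← rev_sum n]
  -- reduce to rearrangement inequality
  have hcomp : ∀ σ : Equiv.Perm (Fin n),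
      ∑ i : Fin n, ((σ i : ℤ) - (i : ℤ))^2
        = ∑ i : Fin n, (i : ℤ)^2 + ∑ i : Fin n, (i : ℤ)^2
          - 2 * ∑ i : Fin n, (i : ℤ) * (σ i : ℤ) := by
    intro σ
    have hsq : ∑ i : Fin n, ((σ i : ℤ))^2 = ∑ i : Fin n, (i : ℤ)^2 :=
      Equiv.sum_comp σ (fun i : Fin n => (i : ℤ)^2)
    calc ∑ i : Fin n, ((σ i : ℤ) - (i : ℤ))^2
        = ∑ i : Fin n, (((σ i : ℤ))^2 + (i:ℤ)^2 - 2 * ((i:ℤ) * (σ i : ℤ))) := by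
          refine Finset.sum_congr rfl fun i _ => by ring
      _ = _ := by
          rw [Finset.sum_sub_distrib, Finset.sum_add_distrib, hsq, ← Finset.mul_sum]
  rw [hcomp r, hcomp Fin.revPerm]
  have hanti : Antivary (fun i : Fin n => (i : ℤ)) (fun i : Fin n => ((Fin.revPerm i : Fin n) : ℤ)) := by
    intro i j hij
    simp only [rev_cast] at hij ⊢
    omega
  have := hanti.sum_mul_le_sum_mul_comp_perm (σ := r.trans Fin.revPerm.symm)
  simp only [Equiv.trans_apply, Equiv.apply_symm_apply] at this
  -- `Fin.revPerm (Fin.revPerm.symm (r i)) = r i`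
  linarith [this]
end

section
/- Let n ≥ 2 and let r, s : Fin n → ℤ be two rankings given by permutations of {0,...,n-1}. Define Spearman's coefficient ρ_S = 1 - (6 / (n(n^2-1))) * Σ_i (r i - s i)^2 (as a rational number). Then -1 ≤ ρ_S ≤ 1. -/
open Finset

lemma six_sum_sq (n : ℕ) : 6 * ∑ k ∈ Finset.range n, (k:ℤ)^2
    = n * (n-1) * (2*n-1) := by
  induction n with
  | zero => simp
  | succ m ih =>
    rw [Finset.sum_range_succ]
    push_cast
    push_cast at ih
    ring_nf
    ring_nf at ih
    linarith

lemma two_sum_id (n : ℕ) : 2 * ∑ k ∈ Finset.range n, (k:ℤ) = n * (n-1) := by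
  induction n with
  | zero => simp
  | succ m ih =>
    rw [Finset.sum_range_succ]
    push_cast
    push_cast at ih
    ring_nf
    ring_nf at ih
    linarith

lemma rearrange_min (n : ℕ) (σ τ : Equiv.Perm (Fin n)) :
    ∑ j : Fin n, (j:ℤ) * ((n:ℤ) - 1 - j) ≤ ∑ i : Fin n, (σ i : ℤ) * (τ i : ℤ) := by
  have hf : Antivary (fun j : Fin n => (j:ℤ)) (fun j : Fin n => (n:ℤ) - 1 - j) := by
    intro i j h
    simp only at h ⊢
    have : (j:ℤ) < i := by omega
    exact_mod_cast this.le
  have key := hf.sum_smul_le_sum_smul_comp_perm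
    (σ := (σ⁻¹.trans τ).trans Fin.revPerm)
  simp only [smul_eq_mul] at key
  have hrev : ∀ j : Fin n, (n:ℤ) - 1 - (((σ⁻¹.trans τ).trans Fin.revPerm) j : ℤ)
      = (τ (σ⁻¹ j) : ℤ) := by
    intro j
    have h1 : (((σ⁻¹.trans τ).trans Fin.revPerm) j : ℕ) = n - 1 - (τ (σ⁻¹ j) : ℕ) := by
      simp [Fin.revPerm, Fin.val_rev, Equiv.trans_apply]
      omega
    have h2 : (τ (σ⁻¹ j) : ℕ) < n := (τ (σ⁻¹ j)).isLt
    have h3 := (((σ⁻¹.trans τ).trans Fin.revPerm) j).isLt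
    omega
  calc ∑ j : Fin n, (j:ℤ) * ((n:ℤ) - 1 - j)
      ≤ ∑ j : Fin n, (j:ℤ) * ((n:ℤ) - 1 - (((σ⁻¹.trans τ).trans Fin.revPerm) j : ℤ)) := key
    _ = ∑ j : Fin n, (j:ℤ) * (τ (σ⁻¹ j) : ℤ) := by
        refine Finset.sum_congr rfl fun j _ => by rw [hrev j]
    _ = ∑ i : Fin n, (σ i : ℤ) * (τ i : ℤ) := by
        rw [← Equiv.sum_comp σ (fun j => (j:ℤ) * (τ (σ⁻¹ j) : ℤ))]
        simp

theorem spearman_rho_bounds (n : ℕ) (hn : 2 ≤ n) (r s : Fin n → ℤ)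
    (σ τ : Equiv.Perm (Fin n))
    (hr : ∀ i, r i = (σ i : ℤ)) (hs : ∀ i, s i = (τ i : ℤ)) :
    -1 ≤ (1 : ℚ) - (6 / (n * (n^2 - 1))) * ∑ i : Fin n, ((r i : ℚ) - (s i : ℚ))^2 ∧
    (1 : ℚ) - (6 / (n * (n^2 - 1))) * ∑ i : Fin n, ((r i : ℚ) - (s i : ℚ))^2 ≤ 1 := by
  set D : ℤ := ∑ i : Fin n, (r i - s i)^2 with hD
  have hsum : ∑ i : Fin n, ((r i : ℚ) - (s i : ℚ))^2 = (D : ℚ) := by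
    rw [hD]; push_cast
    exact Finset.sum_congr rfl fun i _ => by ring
  have hZ : (0:ℚ) < (n:ℚ) * ((n:ℚ)^2 - 1) := by
    have : (2:ℚ) ≤ n := by exact_mod_cast hn
    nlinarith
  have hDnn : (0:ℤ) ≤ D := Finset.sum_nonneg fun i _ => sq_nonneg _
  -- expand D
  have hsq : ∑ k : Fin n, ((k:ℤ))^2 = ∑ k ∈ Finset.range n, (k:ℤ)^2 :=
    Fin.sum_univ_eq_sum_range (fun k => (k:ℤ)^2) n
  have hexp : D = 2 * ∑ k ∈ Finset.range n, (k:ℤ)^2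
      - 2 * ∑ i : Fin n, (σ i : ℤ) * (τ i : ℤ) := by
    have e1 : ∑ i : Fin n, ((σ i : ℤ))^2 = ∑ k : Fin n, ((k:ℤ))^2 := by
      rw [← Equiv.sum_comp σ (fun k : Fin n => ((k:ℤ))^2)]
    have e2 : ∑ i : Fin n, ((τ i : ℤ))^2 = ∑ k : Fin n, ((k:ℤ))^2 := by
      rw [← Equiv.sum_comp τ (fun k : Fin n => ((k:ℤ))^2)]
    have : D = ∑ i : Fin n, (((σ i : ℤ))^2 + ((τ i : ℤ))^2 - 2 * ((σ i : ℤ) * (τ i : ℤ))) := by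
      rw [hD]
      refine Finset.sum_congr rfl fun i _ => by rw [hr i, hs i]; ring
    rw [this, Finset.sum_sub_distrib, Finset.sum_add_distrib, e1, e2, ← Finset.mul_sum, hsq]
    ring
  have hmin := rearrange_min n σ τ
  have hmin' : ∑ j : Fin n, (j:ℤ) * ((n:ℤ) - 1 - j)
      = ((n:ℤ)-1) * ∑ k ∈ Finset.range n, (k:ℤ) - ∑ k ∈ Finset.range n, (k:ℤ)^2 := by
    rw [← Fin.sum_univ_eq_sum_range (fun k => (k:ℤ)) n, ← Fin.sum_univ_eq_sum_range (fun k => (k:ℤ)^2) n,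
      Finset.mul_sum, ← Finset.sum_sub_distrib]
    exact Finset.sum_congr rfl fun j _ => by ring
  have h6 := six_sum_sq n
  have h2 := two_sum_id n
  have hDle : 3 * D ≤ (n:ℤ) * ((n:ℤ)^2 - 1) := by
    rw [hexp]
    rw [hmin'] at hmin
    nlinarith [hmin, h6, h2]
  -- now the rational bounds
  have hcast : (3:ℚ) * (D:ℚ) ≤ (n:ℚ) * ((n:ℚ)^2 - 1) := by exact_mod_cast hDle
  have hDnnQ : (0:ℚ) ≤ (D:ℚ) := by exact_mod_cast hDnn
  constructor
  · rw [hsum]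
    have key : (6 / ((n:ℚ) * ((n:ℚ)^2 - 1))) * (D:ℚ) ≤ 2 := by
      rw [div_mul_eq_mul_div, div_le_iff₀ hZ]
      nlinarith
    linarith
  · rw [hsum]
    have : 0 ≤ (6 / ((n:ℚ) * ((n:ℚ)^2 - 1))) * (D:ℚ) := by positivity
    linarith
end
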